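/- For h > 0, β > 1/2, and w ≠ 0, the Fourier transform of q(x) = (x² + h²)^{-β} satisfies ∫_{-∞}^{∞} (x² + h²)^{-β} e^{-2πi w x} dx = (2^{1-β} √(2π) h^{1/2-β} (2π|w|)^{β-1/2} / Γ(β)) · K_{β-1/2}(2π h |w|), where K_ν is the modified Bessel function of the second kind. -/

import Mathlib

open MeasureTheory Real

/-- The modified Bessel function of the second kind, via its integral representation
`K_ν(y) = Γ(ν + 1/2) (2y)^ν / √π · ∫₀^∞ cos t / (t² + y²)^(ν+1/2) dt`. -/
noncomputable def besselK (ν y : ℝ) : ℝ :=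
  Real.Gamma (ν + 1/2) * (2 * y) ^ ν / Real.sqrt π *
    ∫ t in Set.Ioi (0 : ℝ), Real.cos t / (t ^ 2 + y ^ 2) ^ (ν + 1/2)

private lemma integ_aux {h β : ℝ} (hh : 0 < h) (hβ : 1/2 < β) :
    Integrable fun x : ℝ => (x ^ 2 + h ^ 2) ^ (-β) := by
  have h1 : Integrable fun x : ℝ => (1 + ‖x‖ ^ 2) ^ (-(2*β)/2) :=
    integrable_rpow_neg_one_add_norm_sq (by simp; linarith)
  have h2 := (h1.comp_div (R := h) hh.ne').const_mul ((h^2) ^ (-β))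
  refine h2.congr (Filter.Eventually.of_forall fun x => ?_)
  have hx2 : (0:ℝ) < x ^ 2 + h ^ 2 := by positivity
  show (h ^ 2) ^ (-β) * (1 + ‖x / h‖ ^ 2) ^ (-(2 * β) / 2) = _
  have e1 : (1 + ‖x / h‖ ^ 2) = (x ^ 2 + h ^ 2) / h ^ 2 := by
    rw [norm_div, Real.norm_eq_abs, Real.norm_eq_abs, div_pow, sq_abs, sq_abs]
    field_simp; ring
  rw [e1, show (-(2*β)/2) = -β by ring, Real.div_rpow hx2.le (by positivity),
    Real.rpow_neg (by positivity : (0:ℝ) ≤ h^2)]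
  have hne : ((h:ℝ)^2) ^ β ≠ 0 := by positivity
  show _ = (x ^ 2 + h ^ 2) ^ (-β)
  field_simp

private lemma complex_reduction {h β w : ℝ} (hh : 0 < h) (hβ : 1/2 < β) :
    (∫ x : ℝ, (((x ^ 2 + h ^ 2) ^ (-β) : ℝ) : ℂ) *
        Complex.exp (-(2 * (π : ℂ) * Complex.I * (w : ℂ) * (x : ℂ)))) =
      ((∫ x : ℝ, Real.cos (2 * π * w * x) * (x ^ 2 + h ^ 2) ^ (-β) : ℝ) : ℂ) := by
  have hf := integ_aux hh hβ
  have e : ∀ x : ℝ, (((x ^ 2 + h ^ 2) ^ (-β) : ℝ) : ℂ) *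
      Complex.exp (-(2 * (π : ℂ) * Complex.I * (w : ℂ) * (x : ℂ)))
      = ((Real.cos (2 * π * w * x) * (x ^ 2 + h ^ 2) ^ (-β) : ℝ) : ℂ)
        + ((Real.sin (-(2 * π * w * x)) * (x ^ 2 + h ^ 2) ^ (-β) : ℝ) : ℂ) * Complex.I := by
    intro x
    have e1 : (-(2 * (π:ℂ) * Complex.I * w * x)) = ((-(2*π*w*x) : ℝ) : ℂ) * Complex.I := by
      push_cast; ring
    rw [e1, Complex.exp_mul_I, ← Complex.ofReal_cos, ← Complex.ofReal_sin, Real.cos_neg]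
    push_cast; ring
  simp only [e]
  have hcos : Integrable fun x : ℝ => Real.cos (2*π*w*x) * (x ^ 2 + h ^ 2) ^ (-β) :=
    hf.bdd_mul (Real.continuous_cos.comp (by continuity)).aestronglyMeasurable
      (c := 1) (Filter.Eventually.of_forall fun x => by simpa using Real.abs_cos_le_one _)
  have hsin : Integrable fun x : ℝ => Real.sin (-(2*π*w*x)) * (x ^ 2 + h ^ 2) ^ (-β) :=
    hf.bdd_mul (Real.continuous_sin.comp (by continuity)).aestronglyMeasurable
      (c := 1) (Filter.Eventually.of_forall fun x => by simpa using Real.abs_sin_le_one _)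
  have hcosC : Integrable fun x : ℝ =>
      ((Real.cos (2*π*w*x) * (x ^ 2 + h ^ 2) ^ (-β) : ℝ) : ℂ) := hcos.ofReal
  have hsinC : Integrable fun x : ℝ =>
      ((Real.sin (-(2*π*w*x)) * (x ^ 2 + h ^ 2) ^ (-β) : ℝ) : ℂ) := hsin.ofReal
  rw [integral_add hcosC (hsinC.mul_const Complex.I), integral_mul_const]
  have hodd : (∫ x : ℝ, Real.sin (-(2*π*w*x)) * (x ^ 2 + h ^ 2) ^ (-β)) = 0 := by
    set g := fun x : ℝ => Real.sin (-(2*π*w*x)) * (x ^ 2 + h ^ 2) ^ (-β) with hg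
    have h1 : ∀ x, g (-x) = -g x := by
      intro x; simp only [hg]
      rw [show -(2*π*w*(-x)) = 2*π*w*x by ring, neg_sq,
        show (2*π*w*x) = -(-(2*π*w*x)) by ring, Real.sin_neg]
      ring
    have h2 : ∫ x : ℝ, g (-x) = ∫ x, g x := integral_neg_eq_self g _
    simp only [h1, integral_neg] at h2
    linarith
  have eC : ∀ g : ℝ → ℝ, (∫ x : ℝ, ((g x : ℝ) : ℂ)) = ((∫ x : ℝ, g x : ℝ) : ℂ) :=
    fun g => integral_ofReal
  rw [eC, eC, hodd]
  simp

private lemma coef_aux {a h β : ℝ} (ha : 0 < a) (hh : 0 < h) (hΓ : 0 < Real.Gamma β) :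
    2 * (a⁻¹ * (a ^ 2) ^ β) =
      2 ^ (1 - β) * Real.sqrt (2 * π) * h ^ (1/2 - β) * a ^ (β - 1/2) / Real.Gamma β *
        (Real.Gamma β * (2 * (a * h)) ^ (β - 1/2) / Real.sqrt π) := by
  have h2π : (0:ℝ) < 2 * π := by positivity
  have hL : (0:ℝ) < 2 * (a⁻¹ * (a ^ 2) ^ β) := by positivity
  have hR : (0:ℝ) < 2 ^ (1 - β) * Real.sqrt (2 * π) * h ^ (1/2 - β) * a ^ (β - 1/2)
      / Real.Gamma β * (Real.Gamma β * (2 * (a * h)) ^ (β - 1/2) / Real.sqrt π) := by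
    positivity
  rw [← Real.exp_log hL, ← Real.exp_log hR]
  congr 1
  have n1 : a ≠ 0 := ha.ne'
  have n2 : h ≠ 0 := hh.ne'
  have n3 : Real.Gamma β ≠ 0 := hΓ.ne'
  have n4 : Real.sqrt π ≠ 0 := by positivity
  have n5 : Real.sqrt (2*π) ≠ 0 := by positivity
  have n6 : (2:ℝ)^(1-β) ≠ 0 := by positivity
  have n7 : h^(1/2-β) ≠ 0 := by positivity
  have n8 : a^(β-1/2) ≠ 0 := by positivity
  have n9 : (2*(a*h))^(β-1/2) ≠ 0 := by positivity
  have n10 : π ≠ 0 := Real.pi_ne_zero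
  have n11 : Real.sqrt 2 ≠ 0 := by positivity
  have m1 : ∀ y : ℝ, a ^ y ≠ 0 := fun y => (Real.rpow_pos_of_pos ha y).ne'
  have m2 : ∀ y : ℝ, h ^ y ≠ 0 := fun y => (Real.rpow_pos_of_pos hh y).ne'
  have m3 : ∀ y : ℝ, (2:ℝ) ^ y ≠ 0 := fun y => (Real.rpow_pos_of_pos two_pos y).ne'
  have m4 : ∀ y : ℝ, (a*h*2) ^ y ≠ 0 := fun y => (Real.rpow_pos_of_pos (by positivity) y).ne'
  have m5 : ∀ y : ℝ, (2*(a*h)) ^ y ≠ 0 := fun y => (Real.rpow_pos_of_pos (by positivity) y).ne'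
  have m6 : ∀ y : ℝ, ((a:ℝ)^2) ^ y ≠ 0 := fun y => (Real.rpow_pos_of_pos (by positivity) y).ne'
  have m7 : ∀ y : ℝ, (a*(h*2)) ^ y ≠ 0 := fun y => (Real.rpow_pos_of_pos (by positivity) y).ne'
  simp [*, Real.log_mul, Real.log_div, Real.log_inv, Real.log_pow,
    Real.log_rpow two_pos, Real.log_rpow ha, Real.log_rpow hh,
    Real.log_rpow (show (0:ℝ) < 2*(a*h) from by positivity),
    Real.log_rpow (pow_pos ha 2), Real.log_sqrt h2π.le,
    Real.log_sqrt (show (0:ℝ) ≤ 2 by norm_num), Real.log_sqrt Real.pi_pos.le,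
    Real.log_rpow (show (0:ℝ) < a*h*2 from by positivity),
    Real.log_rpow (show (0:ℝ) < a*(h*2) from by positivity),
    mul_ne_zero_iff, div_ne_zero_iff, inv_eq_zero]
  ring

private lemma real_reduction {h β w : ℝ} (hh : 0 < h) (hβ : 1/2 < β) (hw : w ≠ 0) :
    (∫ x : ℝ, Real.cos (2 * π * w * x) * (x ^ 2 + h ^ 2) ^ (-β))
      = 2 * ((2*π*|w|)⁻¹ * (((2*π*|w|) ^ 2) ^ β *
          ∫ s in Set.Ioi (0:ℝ), Real.cos s / (s ^ 2 + (2*π*h*|w|) ^ 2) ^ β)) := by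
  set a := 2*π*|w| with hadef
  have ha : 0 < a := by
    have := Real.pi_pos; have := abs_pos.mpr hw; positivity
  have e1 : ∀ x : ℝ, Real.cos (2 * π * w * x) * (x ^ 2 + h ^ 2) ^ (-β)
      = Real.cos (a * |x|) * (|x| ^ 2 + h ^ 2) ^ (-β) := by
    intro x
    rw [sq_abs]
    congr 1
    rw [show a * |x| = |2 * π * w * x| by
      rw [abs_mul, abs_mul, abs_mul, abs_of_pos Real.pi_pos, hadef]
      rw [abs_two], Real.cos_abs]
  simp_rw [e1]
  rw [integral_comp_abs (f := fun t : ℝ => Real.cos (a * t) * (t ^ 2 + h ^ 2) ^ (-β))]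
  have step2 := integral_comp_mul_left_Ioi
    (fun s : ℝ => Real.cos s * ((s/a) ^ 2 + h ^ 2) ^ (-β)) 0 ha
  simp only [mul_div_cancel_left₀ _ ha.ne', mul_zero, smul_eq_mul] at step2
  rw [step2]
  have e3 : ∀ s : ℝ, Real.cos s * ((s/a) ^ 2 + h ^ 2) ^ (-β)
      = ((a ^ 2) ^ β) * (Real.cos s / (s ^ 2 + (2*π*h*|w|) ^ 2) ^ β) := by
    intro s
    have hy : (2*π*h*|w|) = a * h := by rw [hadef]; ring
    have e4 : (s/a) ^ 2 + h ^ 2 = (s ^ 2 + (2*π*h*|w|) ^ 2) / a ^ 2 := by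
      rw [hy]; field_simp
    rw [e4, Real.div_rpow (by positivity) (by positivity),
      Real.rpow_neg (by positivity : (0:ℝ) ≤ a^2),
      Real.rpow_neg (by positivity : (0:ℝ) ≤ s ^ 2 + (2*π*h*|w|) ^ 2)]
    field_simp
  simp_rw [e3]
  rw [MeasureTheory.integral_const_mul]

theorem stmt_4 (h β w : ℝ) (hh : 0 < h) (hβ : 1/2 < β) (hw : w ≠ 0) :
    (∫ x : ℝ, (((x ^ 2 + h ^ 2) ^ (-β) : ℝ) : ℂ) *
        Complex.exp (-(2 * (π : ℂ) * Complex.I * (w : ℂ) * (x : ℂ)))) =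
      ((2 ^ (1 - β) * Real.sqrt (2 * π) * h ^ (1/2 - β) * (2 * π * |w|) ^ (β - 1/2)
          / Real.Gamma β * besselK (β - 1/2) (2 * π * h * |w|) : ℝ) : ℂ) := by
  rw [complex_reduction hh hβ, real_reduction hh hβ hw]
  congr 1
  have ha : 0 < 2*π*|w| := by
    have := Real.pi_pos; have := abs_pos.mpr hw; positivity
  have hΓ : 0 < Real.Gamma β := Real.Gamma_pos_of_pos (by linarith)
  rw [besselK]
  simp only [show β - 1/2 + 1/2 = β from by ring]
  rw [show 2 * (2*π*h*|w|) = 2 * (2*π*|w| * h) from by ring]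
  rw [show (2:ℝ) * ((2*π*|w|)⁻¹ * (((2*π*|w|) ^ 2) ^ β *
      ∫ s in Set.Ioi (0:ℝ), Real.cos s / (s ^ 2 + (2*π*h*|w|) ^ 2) ^ β))
    = (2 * ((2*π*|w|)⁻¹ * ((2*π*|w|) ^ 2) ^ β)) *
      ∫ s in Set.Ioi (0:ℝ), Real.cos s / (s ^ 2 + (2*π*h*|w|) ^ 2) ^ β from by ring]
  rw [coef_aux ha hh hΓ]
  ring
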